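/- The regular language b*ab* = { bⁱabʲ : i,j ≥ 0 } over {a,b} is not accepted by any quasi-deterministic all-final (qDF) sensing 5'→3' WK automaton. -/

import Mathlib

open Computability

/-- The two-letter alphabet `{a, b}`. -/
inductive Letter : Type
  | a : Letter
  | b : Letter
deriving DecidableEq

instance : Fintype Letter :=
  ⟨{Letter.a, Letter.b}, fun x => by cases x <;> simp⟩

open Letter

/-- A sensing 5'→3' Watson-Crick automaton over the alphabet `T` with state set `Q`:
an initial state `q0`, a set `F` of final states, and a transition mapping
`δ : Q × T* × T* → 2^Q` that is nonempty for only finitely many triples. -/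
structure WKAutomaton (T : Type) (Q : Type) where
  q0 : Q
  F : Set Q
  δ : Q → List T → List T → Set Q
  finite_delta : {t : Q × List T × List T | (δ t.1 t.2.1 t.2.2).Nonempty}.Finite

namespace WKAutomaton

variable {T Q : Type}

/-- One computation step on configurations:
`(q, x ++ w' ++ y) ⇒ (q', w')` iff `q' ∈ δ q x y`. -/
def Step (A : WKAutomaton T Q) (c c' : Q × List T) : Prop :=
  ∃ x y : List T, c.2 = x ++ c'.2 ++ y ∧ c'.1 ∈ A.δ c.1 x y

/-- The accepted language: words `w` with `(q₀, w) ⇒* (q_F, λ)` for some final `q_F`. -/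
def Lang (A : WKAutomaton T Q) : Set (List T) :=
  {w | ∃ qf ∈ A.F, Relation.ReflTransGen A.Step (A.q0, w) (qf, [])}

/-- `A` is deterministic: in every configuration at most one computation step
(choice of `x`, `y`, `w'`, `q'`) is applicable. -/
def Deterministic (A : WKAutomaton T Q) : Prop :=
  ∀ (q : Q) (w x₁ y₁ w₁ x₂ y₂ w₂ : List T) (q₁ q₂ : Q),
    w = x₁ ++ w₁ ++ y₁ → q₁ ∈ A.δ q x₁ y₁ →
    w = x₂ ++ w₂ ++ y₂ → q₂ ∈ A.δ q x₂ y₂ →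
    x₁ = x₂ ∧ y₁ = y₂ ∧ w₁ = w₂ ∧ q₁ = q₂

/-- `A` is quasi-deterministic: for every configuration `(q,w)`, whenever
`(q,w) ⇒ (p,u)` and `(q,w) ⇒ (r,v)`, it holds that `p = r`. -/
def QuasiDet (A : WKAutomaton T Q) : Prop :=
  ∀ (q : Q) (w : List T) (p r : Q) (u v : List T),
    A.Step (q, w) (p, u) → A.Step (q, w) (r, v) → p = r

/-- `A` is state-deterministic: for every state `q` there is at most one state `p`
with `p ∈ δ(q,u,v)` for some words `u`, `v`. -/
def StateDet (A : WKAutomaton T Q) : Prop :=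
  ∀ (q p₁ p₂ : Q) (u₁ v₁ u₂ v₂ : List T),
    p₁ ∈ A.δ q u₁ v₁ → p₂ ∈ A.δ q u₂ v₂ → p₁ = p₂

/-- `A` is stateless: `Q = F = {q₀}`. -/
def Stateless (A : WKAutomaton T Q) : Prop :=
  (∀ q : Q, q = A.q0) ∧ A.F = {A.q0}

/-- `A` is all-final: `Q = F`. -/
def AllFinal (A : WKAutomaton T Q) : Prop := A.F = Set.univ

/-- `A` is simple: at most one head reads in each step. -/
def Simple (A : WKAutomaton T Q) : Prop :=
  ∀ (q : Q) (u v : List T), (A.δ q u v).Nonempty → u = [] ∨ v = []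

/-- `A` is 1-limited: exactly one letter is read in each step. -/
def OneLimited (A : WKAutomaton T Q) : Prop :=
  ∀ (q : Q) (u v : List T), (A.δ q u v).Nonempty →
    (u = [] ∧ v.length = 1) ∨ (u.length = 1 ∧ v = [])

end WKAutomaton

/-- Equality of languages modulo the empty word. -/
def EqModLambda {T : Type} (L₁ L₂ : Set (List T)) : Prop :=
  ∀ w : List T, w ≠ [] → (w ∈ L₁ ↔ w ∈ L₂)

/-- `L` is accepted (modulo the empty word) by some sensing 5'→3' WK automaton
with a finite state set satisfying the property `P`. -/
def AcceptsWith (T : Type) (P : ∀ Q : Type, WKAutomaton T Q → Prop)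
    (L : Set (List T)) : Prop :=
  ∃ (Q : Type) (_ : Finite Q) (A : WKAutomaton T Q), P Q A ∧ EqModLambda A.Lang L

/-- The language `b*ab*`. -/
def Lbab : Set (List Letter) :=
  {w | ∃ i j : ℕ, w = List.replicate i b ++ a :: List.replicate j b}

/-- The regular language `b*ab*` is not accepted by any quasi-deterministic
all-final (qDF) sensing 5'→3' WK automaton (modulo the empty word). -/
theorem bab_not_qDF :
    ¬ AcceptsWith Letter (fun _ A => A.QuasiDet ∧ A.AllFinal) Lbab := by
  rintro ⟨Q, _, A, ⟨-, haf⟩, heq⟩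
  -- a bound on the lengths of the words read in a single transition
  obtain ⟨K, hK⟩ : ∃ K, ∀ q x y, (A.δ q x y).Nonempty → x.length ≤ K ∧ y.length ≤ K := by
    obtain ⟨K, hKub⟩ := (A.finite_delta.image
      (fun t => max t.2.1.length t.2.2.length)).bddAbove
    refine ⟨K, fun q x y h => ?_⟩
    have hmem : max x.length y.length ∈
        (fun t : Q × List Letter × List Letter => max t.2.1.length t.2.2.length) ''
        {t : Q × List Letter × List Letter | (A.δ t.1 t.2.1 t.2.2).Nonempty} :=
      Set.mem_image_of_mem _ (show (q, x, y) ∈ _ from h)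
    have := hKub hmem
    exact ⟨le_trans (le_max_left _ _) this, le_trans (le_max_right _ _) this⟩
  set wK : List Letter := List.replicate K b ++ a :: List.replicate K b with hwK
  -- key lemma: from any accepting computation of a word containing `a`,
  -- we can extract the pure part read before the step consuming `a`
  have L1 : ∀ (c : Q × List Letter) (q' : Q),
      Relation.ReflTransGen A.Step c (q', []) → a ∈ c.2 →
      ∃ (vl vr u' x y : List Letter) (p : Q),
        c.2 = vl ++ (x ++ u' ++ y) ++ vr ∧ a ∉ vl ∧ a ∉ vr ∧
        Relation.ReflTransGen A.Step (c.1, vl ++ vr) (p, []) ∧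
        (A.δ p x y).Nonempty ∧ (a ∈ x ∨ a ∈ y) := by
    intro c q' hcomp
    induction hcomp using Relation.ReflTransGen.head_induction_on with
    | refl => intro h; simp at h
    | @head c₁ c₂ hstep htail ih =>
      intro ha
      obtain ⟨x0, y0, hw, hd⟩ := hstep
      by_cases hax : a ∈ x0 ∨ a ∈ y0
      · refine ⟨[], [], c₂.2, x0, y0, c₁.1, by simpa using hw, by simp, by simp, ?_, ⟨c₂.1, hd⟩, hax⟩
        simpa using (Relation.ReflTransGen.refl : Relation.ReflTransGen A.Step (c₁.1, []) (c₁.1, []))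
      · push_neg at hax
        have ha2 : a ∈ c₂.2 := by
          rw [hw] at ha
          rcases List.mem_append.mp ha with h | h
          · rcases List.mem_append.mp h with h | h
            · exact absurd h hax.1
            · exact h
          · exact absurd h hax.2
        obtain ⟨vl, vr, u', x, y, p, h1, h2, h3, h4, h5, h6⟩ := ih ha2
        refine ⟨x0 ++ vl, vr ++ y0, u', x, y, p, ?_, ?_, ?_, ?_, h5, h6⟩
        · rw [hw, h1]; simp [List.append_assoc]
        · simp only [List.mem_append]; rintro (h | h); exacts [hax.1 h, h2 h]
        · simp only [List.mem_append]; rintro (h | h); exacts [h3 h, hax.2 h]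
        · refine Relation.ReflTransGen.head ?_ h4
          exact ⟨x0, y0, by simp [List.append_assoc], hd⟩
  -- the word b^K a b^K
  have hwne : wK ≠ [] := by simp [hwK]
  have hwL : wK ∈ Lbab := ⟨K, K, rfl⟩
  obtain ⟨qf, -, hcomp⟩ := (heq wK hwne).mpr hwL
  have haw : a ∈ wK := by simp [hwK]
  obtain ⟨vl, vr, u', x, y, p, h1, h2, h3, h4, h5, h6⟩ := L1 (A.q0, wK) qf hcomp haw
  -- the part read before the `a`-step must be empty
  have hv : vl = [] ∧ vr = [] := by
    rw [← List.append_eq_nil_iff]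
    by_contra hne
    have hmemL : vl ++ vr ∈ A.Lang := ⟨p, by rw [haf]; trivial, h4⟩
    obtain ⟨i, j, hij⟩ := (heq _ hne).mp hmemL
    have hav : a ∈ vl ++ vr := by rw [hij]; simp
    rcases List.mem_append.mp hav with h | h
    exacts [h2 h, h3 h]
  obtain ⟨hvl, hvr⟩ := hv
  rw [hvl, hvr] at h1
  simp only [List.nil_append, List.append_nil] at h1
  -- now wK = x ++ u' ++ y with |x|,|y| ≤ K, but a ∈ x or a ∈ y: impossible
  obtain ⟨hx, hy⟩ := hK p x y h5
  have key : ∀ z r : List Letter, z.length ≤ K → z ++ r = wK → a ∉ z := by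
    intro z r hlen hzr haz
    have hz : z = (z ++ r).take z.length := by simp
    rw [hzr, hwK, List.take_append_of_le_length (by simpa using hlen),
      List.take_replicate] at hz
    rw [hz] at haz
    exact absurd (List.eq_of_mem_replicate haz) (by decide)
  have hpal : wK.reverse = wK := by
    simp [hwK, List.reverse_append, List.reverse_replicate, List.append_assoc]
  rcases h6 with h | h
  · exact key x (u' ++ y) hx (by rw [h1, List.append_assoc]) h
  · refine key y.reverse (x ++ u').reverse (by simpa using hy) ?_ (List.mem_reverse.mpr h)
    rw [← hpal, h1]
    simp [List.reverse_append, List.append_assoc]
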